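/- Let (ā, b̄) be coprime positive integers with b̄ ≤ ℓ₁, and let k ≥ 1. Then there are no integers a₁, b₁ with 0 ≤ a₁ ≤ kā, 0 ≤ b₁ ≤ kb̄ satisfying (kℓ₁ā + 1)/(kℓ₂b̄) > (ℓ₁a₁)/(ℓ₂b₁) > (ℓ₁ā)/(ℓ₂b̄). -/
import Mathlib


/-- Let `ℓ₁, ℓ₂` be positive integers, `(ā,b̄)` coprime positive integers with `b̄ ≤ ℓ₁`,
and `k ≥ 1`.  Then there are no integers `a₁, b₁` with `0 ≤ a₁ ≤ kā`, `0 ≤ b₁ ≤ kb̄`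
satisfying `(kℓ₁ā + 1)/(kℓ₂b̄) > (ℓ₁a₁)/(ℓ₂b₁) > (ℓ₁ā)/(ℓ₂b̄)`
(in the cross-multiplied, division-free form). -/
theorem stmt7 (ℓ₁ ℓ₂ a b k : ℕ) (hℓ₁ : 0 < ℓ₁) (hℓ₂ : 0 < ℓ₂)
    (ha : 0 < a) (hb : 0 < b) (hab : Nat.Coprime a b) (hbl : b ≤ ℓ₁) (hk : 1 ≤ k) :
    ¬ ∃ a₁ b₁ : ℕ, a₁ ≤ k * a ∧ b₁ ≤ k * b ∧
      (k * ℓ₂ * b) * (ℓ₁ * a₁) < (k * ℓ₁ * a + 1) * (ℓ₂ * b₁) ∧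
      (ℓ₂ * b₁) * (ℓ₁ * a) < (ℓ₁ * a₁) * (ℓ₂ * b) := by
  rintro ⟨a₁, b₁, h1, h2, h3, h4⟩
  have h4' : a * b₁ + 1 ≤ b * a₁ := by
    rcases Nat.lt_or_ge (a * b₁) (b * a₁) with h | h
    · omega
    · exfalso; nlinarith [Nat.mul_le_mul_left (ℓ₁*ℓ₂) h]
  have h3' : k * ℓ₁ * (b * a₁) < k * ℓ₁ * (a * b₁) + b₁ := by
    by_contra h
    push_neg at h
    nlinarith [Nat.mul_le_mul_left ℓ₂ h]
  have hb1 : k * ℓ₁ < b₁ := by nlinarith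
  have hle : b₁ ≤ k * ℓ₁ := le_trans h2 (Nat.mul_le_mul_left k hbl)
  omega
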